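/- Let z₁, z₂, z₃ ∈ ℂ be noncollinear, and write (z − z₁)(z − z₂)(z − z₃) = z³ + az² + bz + c, so that a = −(z₁ + z₂ + z₃), b = z₁z₂ + z₁z₃ + z₂z₃, c = −z₁z₂z₃. Then every u ∈ ℂ satisfying (a² − 3b)u² + (ab − 9c)u + (b² − 3ac) = 0 satisfies the classical isodynamic-point equations |u − z₁|·|z₃ − z₂| = |u − z₂|·|z₃ − z₁| = |u − z₃|·|z₂ − z₁|. -/

import Mathlib

open Complex

/-- Every root `u` of the isodynamic polynomial
`(a² − 3b)u² + (ab − 9c)u + (b² − 3ac)` of the cubic with noncollinear roots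
`z₁, z₂, z₃` satisfies the classical isodynamic-point equations. -/
theorem isodynamic_points_of_noncollinear_triple
    (z₁ z₂ z₃ : ℂ)
    (h12 : z₁ ≠ z₂) (h13 : z₁ ≠ z₃) (h23 : z₂ ≠ z₃)
    (hnc : (z₃ - z₁) / (z₂ - z₁) ∉ Set.range ((↑) : ℝ → ℂ))
    (a b c : ℂ)
    (ha : a = -(z₁ + z₂ + z₃))
    (hb : b = z₁ * z₂ + z₁ * z₃ + z₂ * z₃)
    (hc : c = -(z₁ * z₂ * z₃))
    (u : ℂ)
    (hu : (a ^ 2 - 3 * b) * u ^ 2 + (a * b - 9 * c) * u + (b ^ 2 - 3 * a * c) = 0) :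
    ‖u - z₁‖ * ‖z₃ - z₂‖
      = ‖u - z₂‖ * ‖z₃ - z₁‖ ∧
    ‖u - z₂‖ * ‖z₃ - z₁‖
      = ‖u - z₃‖ * ‖z₂ - z₁‖ := by
  subst ha hb hc
  have hAB : ((u - z₁) * (z₂ - z₃)) ^ 3 = ((u - z₂) * (z₃ - z₁)) ^ 3 := by
    linear_combination ((u - z₁) * (z₂ - z₃) - (u - z₂) * (z₃ - z₁)) * hu
  have hBC : ((u - z₂) * (z₃ - z₁)) ^ 3 = ((u - z₃) * (z₁ - z₂)) ^ 3 := by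
    linear_combination ((u - z₂) * (z₃ - z₁) - (u - z₃) * (z₁ - z₂)) * hu
  have key : ∀ x y : ℂ, x ^ 3 = y ^ 3 → ‖x‖ = ‖y‖ := by
    intro x y h
    have h3 : ‖x‖ ^ 3 = ‖y‖ ^ 3 := by
      rw [← norm_pow, ← norm_pow, h]
    exact (pow_left_strictMonoOn₀ (three_ne_zero)).eq_iff_eq
      (norm_nonneg x) (norm_nonneg y) |>.mp h3
  have h1 := key _ _ hAB
  have h2 := key _ _ hBC
  rw [norm_mul, norm_mul] at h1 h2
  constructor
  · rw [norm_sub_rev z₃ z₂]; exact h1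
  · rw [norm_sub_rev z₁ z₂] at h2; exact h2
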